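/- arXiv:2406.01041 — 3 statements merged into one kernel-verified Lean document; each statement's English description precedes it below -/
import Mathlib

section
/- The set of cycles Z := Fix(J_A R) is closed and convex, and Z ⊆ F_1 × F_2 × ⋯ × F_m. -/
open Pointwise InnerProductSpace

variable {X : Type*} [NormedAddCommGroup X] [InnerProductSpace ℝ X]
variable {m : ℕ} [NeZero m]

/-- A set-valued operator `A : X ⇉ X` is monotone. -/
def SVMonotone (A : X → Set X) : Prop :=
  ∀ ⦃x y u v : X⦄, u ∈ A x → v ∈ A y → 0 ≤ ⟪x - y, u - v⟫_ℝ

/-- A set-valued operator is maximally monotone. -/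
def SVMaxMonotone (A : X → Set X) : Prop :=
  SVMonotone A ∧ ∀ x u : X, (∀ y v, v ∈ A y → 0 ≤ ⟪x - y, u - v⟫_ℝ) → u ∈ A x

/-- `J` is the (single-valued, full-domain) resolvent `(Id + A)⁻¹` of `A`. -/
def IsResolventOf (J : X → X) (A : X → Set X) : Prop :=
  ∀ x y : X, J y = x ↔ y - x ∈ A x

/-- The cyclic composition `J_i ∘ J_{i-1} ∘ ⋯ ∘ J_1 ∘ J_m ∘ ⋯ ∘ J_{i+1}`
(indices understood cyclically in `Fin m`, `0`-based). -/
def cyclicComp (J : Fin m → X → X) (i : Fin m) : X → X :=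
  fun x => (List.range m).foldl (fun y k => J (i + 1 + Fin.ofNat m k) y) x

/-- `F i` : the fixed point set of the cyclic composition ending with `J i`. -/
def cycFix (J : Fin m → X → X) (i : Fin m) : Set X :=
  {x | cyclicComp J i x = x}

/-- `(z_1, …, z_m)` is a cycle: `z_{i} = J_i z_{i-1}` cyclically. -/
def IsCycle (J : Fin m → X → X) (z : Fin m → X) : Prop :=
  ∀ i : Fin m, z i = J i (z (i - 1))

/-- The circular right-shift operator on `X^m`. -/
def shiftR (z : Fin m → X) : Fin m → X := fun i => z (i - 1)

/-- The coordinatewise resolvent `J_A` on `X^m`. -/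
def resProd (J : Fin m → X → X) (z : Fin m → X) : Fin m → X := fun i => J i (z i)

/-- The product operator `A = A_1 × ⋯ × A_m` on `X^m`. -/
def prodOp (A : Fin m → X → Set X) : (Fin m → X) → Set (Fin m → X) :=
  fun z => {u | ∀ i, u i ∈ A i (z i)}

/-- The set of cycles `Z = Fix (J_A ∘ R)`. -/
def cycleSet (J : Fin m → X → X) : Set (Fin m → X) :=
  {z | resProd J (shiftR z) = z}


private lemma res_firm' {A : X → Set X} {J : X → X} (hA : SVMonotone A)
    (hJ : IsResolventOf J A) (x y : X) : ‖J x - J y‖ ≤ ‖x - y‖ := by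
  have hu : x - J x ∈ A (J x) := (hJ (J x) x).mp rfl
  have hv : y - J y ∈ A (J y) := (hJ (J y) y).mp rfl
  have h0 := hA hu hv
  have key : ‖J x - J y‖ ^ 2 ≤ ⟪J x - J y, x - y⟫_ℝ := by
    have : ⟪J x - J y, (x - J x) - (y - J y)⟫_ℝ
        = ⟪J x - J y, x - y⟫_ℝ - ‖J x - J y‖ ^ 2 := by
      rw [← real_inner_self_eq_norm_sq, ← inner_sub_right]
      congr 1
      abel
    rw [this] at h0
    linarith
  have hcs := real_inner_le_norm (J x - J y) (x - y)
  nlinarith [norm_nonneg (J x - J y), norm_nonneg (x - y)]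

open Fin.NatCast in
private lemma subset_lemma' (J : Fin m → X → X) (z : Fin m → X)
    (hz : ∀ i : Fin m, J i (z (i - 1)) = z i) (i : Fin m) : z i ∈ cycFix J i := by
  have key : ∀ n : ℕ, List.foldl (fun y (k : Fin m) => J (i + 1 + k) y) (z i)
      ((List.range n).map (Nat.cast)) = z (i + (n : Fin m)) := by
    intro n
    induction n with
    | zero => simp
    | succ n ih =>
        rw [List.range_succ, List.map_append, List.foldl_append, ih, List.map_singleton,
          List.foldl_cons, List.foldl_nil]
        have h1 : ((n + 1 : ℕ) : Fin m) = (n : Fin m) + 1 := by push_cast; ring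
        have h2 : i + 1 + (n : Fin m) - 1 = i + (n : Fin m) := by abel
        rw [← h2, hz (i + 1 + (n : Fin m))]
        congr 1
        rw [h1]; abel
  have hc : cyclicComp J i (z i) = z (i + (m : Fin m)) := by
    rw [← key m]; simp only [cyclicComp, List.foldl_map]; rfl
  show cyclicComp J i (z i) = z i
  simpa [Fin.natCast_self] using hc

private lemma conv_lemma (J : Fin m → X → X) (hne : ∀ i, ∀ x y : X, ‖J i x - J i y‖ ≤ ‖x - y‖) :
    Convex ℝ (cycleSet J) := by
  intro x hx y hy a b ha hb hab
  set E := PiLp 2 (fun _ : Fin m => X) with hE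
  let T : E → E := fun z => WithLp.toLp 2 (resProd J (shiftR z))
  let x' : E := WithLp.toLp 2 x
  let y' : E := WithLp.toLp 2 y
  have nonexp : ∀ z w : E, dist (T z) (T w) ≤ dist z w := by
    intro z w
    rw [dist_eq_norm, dist_eq_norm, PiLp.norm_eq_of_L2, PiLp.norm_eq_of_L2]
    apply Real.sqrt_le_sqrt
    have step : ∀ i, ‖(T z - T w) i‖ ^ 2 ≤ ‖(z - w) (i - 1)‖ ^ 2 := by
      intro i
      have : (T z - T w) i = J i (z (i-1)) - J i (w (i-1)) := by rw [PiLp.sub_apply]; rfl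
      rw [this]
      have h := hne i (z (i-1)) (w (i-1))
      have : (z - w) (i - 1) = z (i-1) - w (i-1) := PiLp.sub_apply _ _ _ _
      rw [this]
      exact pow_le_pow_left₀ (norm_nonneg _) h 2
    calc ∑ i, ‖(T z - T w) i‖ ^ 2 ≤ ∑ i, ‖(z - w) (i - 1)‖ ^ 2 :=
          Finset.sum_le_sum fun i _ => step i
      _ = ∑ i, ‖(z - w) i‖ ^ 2 :=
          Fintype.sum_equiv (Equiv.subRight (1 : Fin m)) _ _ (fun i => rfl)
  -- fixed points
  have hx' : T x' = x' := congrArg (WithLp.toLp 2) hx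
  have hy' : T y' = y' := congrArg (WithLp.toLp 2) hy
  set p : E := a • x' + b • y' with hp
  set d := dist x' y' with hd
  have hxp : x' - p = b • (x' - y') := by
    rw [hp]
    have : a = 1 - b := by linarith
    rw [this]; module
  have hyp : p - y' = a • (x' - y') := by
    rw [hp]
    have : b = 1 - a := by linarith
    rw [this]; module
  have h1 : dist x' (T p) ≤ b * d := by
    calc dist x' (T p) = dist (T x') (T p) := by rw [hx']
      _ ≤ dist x' p := nonexp _ _
      _ = b * d := by rw [dist_eq_norm, hxp, norm_smul, Real.norm_of_nonneg hb, hd, dist_eq_norm]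
  have h2 : dist (T p) y' ≤ a * d := by
    calc dist (T p) y' = dist (T p) (T y') := by rw [hy']
      _ ≤ dist p y' := nonexp _ _
      _ = a * d := by rw [dist_eq_norm, hyp, norm_smul, Real.norm_of_nonneg ha, hd, dist_eq_norm]
  have htri : d ≤ dist x' (T p) + dist (T p) y' := dist_triangle _ _ _
  have hd' : a * d + b * d = d := by rw [← add_mul, hab, one_mul]
  have hsum : dist x' (T p) + dist (T p) y' = d := by linarith
  have hw : Wbtw ℝ x' (T p) y' := dist_add_dist_eq_iff.mp hsum
  rcases hw with ⟨t, ⟨ht0, ht1⟩, hTp⟩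
  have hTp' : T p = (1 - t) • x' + t • y' := by
    rw [← hTp]; simp [AffineMap.lineMap_apply]; module
  -- compute dist x (T p) = t * d
  have hdx : dist x' (T p) = t * d := by
    rw [dist_eq_norm, hTp']
    have : x' - ((1 - t) • x' + t • y') = t • (x' - y') := by module
    rw [this, norm_smul, Real.norm_of_nonneg ht0, hd, dist_eq_norm]
  have hdy : dist (T p) y' = (1 - t) * d := by
    rw [dist_eq_norm, hTp']
    have : ((1 - t) • x' + t • y') - y' = (1 - t) • (x' - y') := by
      module
    rw [this, norm_smul, Real.norm_of_nonneg (by linarith), hd, dist_eq_norm]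
  suffices hT : T p = p by
    have h := congrArg WithLp.ofLp hT
    exact h
  rcases eq_or_lt_of_le (dist_nonneg : (0:ℝ) ≤ d) with hd0 | hd0
  · have hxy : x' = y' := by
      have := dist_eq_zero.mp hd0.symm
      exact this
    have e1 : (1 - t) • y' + t • y' = y' := by module
    have e2 : a • y' + b • y' = y' := by rw [← add_smul, hab, one_smul]
    rw [hTp', hp, hxy, e1, e2]
  · have htb : t = b := by
      have e1 : t * d = b * d := by linarith
      exact mul_right_cancel₀ (ne_of_gt hd0) e1
    rw [hTp', hp, htb]
    have : 1 - b = a := by linarith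
    rw [this]

/-- The set of cycles `Z = Fix (J_A R)` is closed and convex, and
`Z ⊆ F_1 × F_2 × ⋯ × F_m`. -/
theorem cycleSet_closed_convex_subset
    (A : Fin m → X → Set X) (J : Fin m → X → X)
    (hA : ∀ i, SVMaxMonotone (A i)) (hJ : ∀ i, IsResolventOf (J i) (A i)) :
    IsClosed (cycleSet J) ∧ Convex ℝ (cycleSet J) ∧
    cycleSet J ⊆ {z : Fin m → X | ∀ i, z i ∈ cycFix J i} := by
  have hne : ∀ i, ∀ x y : X, ‖J i x - J i y‖ ≤ ‖x - y‖ :=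
    fun i => res_firm' (hA i).1 (hJ i)
  refine ⟨?_, conv_lemma J hne, ?_⟩
  · have hcont : Continuous (fun z : Fin m → X => resProd J (shiftR z)) := by
      apply continuous_pi
      intro i
      have hlip : LipschitzWith 1 (J i) := LipschitzWith.of_dist_le_mul (by
        intro a b
        rw [NNReal.coe_one, one_mul, dist_eq_norm, dist_eq_norm]
        exact hne i a b)
      exact hlip.continuous.comp (continuous_apply (i - 1))
    exact isClosed_eq hcont continuous_id
  · intro z hz i
    have hz' : ∀ j : Fin m, J j (z (j - 1)) = z j := fun j => congrFun hz j
    exact subset_lemma' J z hz' i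
end

section
/- The i-th coordinate projection restricted to the set of cycles, Q_i|_Z : Z → F_i, is a bijection, and Q_i(Z) = F_i. -/
open Pointwise InnerProductSpace

variable {X : Type*} [NormedAddCommGroup X] [InnerProductSpace ℝ X]
variable {m : ℕ} [NeZero m]

open Fin.NatCast Fin.CommRing

/-- Partial cyclic composition of length `k`. -/
private def pcomp (J : Fin m → X → X) (i : Fin m) (k : ℕ) (x : X) : X :=
  (List.range k).foldl (fun y l => J (i + 1 + Fin.ofNat m l) y) x

private lemma pcomp_succ (J : Fin m → X → X) (i : Fin m) (k : ℕ) (x : X) :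
    pcomp J i (k+1) x = J (i + 1 + (k : Fin m)) (pcomp J i k x) := by
  simp [pcomp, List.range_succ, Fin.ofNat_eq_cast]

private lemma cyclicComp_eq_pcomp (J : Fin m → X → X) (i : Fin m) (x : X) :
    cyclicComp J i x = pcomp J i m x := rfl

private lemma cycle_step (J : Fin m → X → X) {z : Fin m → X}
    (hz : z ∈ cycleSet J) (j : Fin m) : z j = J j (z (j - 1)) := by
  have := congrFun hz j
  simpa [resProd, shiftR] using this.symm

private lemma cycle_coord (J : Fin m → X → X) {z : Fin m → X}
    (hz : z ∈ cycleSet J) (i : Fin m) (k : ℕ) :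
    z (i + (k : Fin m)) = pcomp J i k (z i) := by
  induction k with
  | zero => simp [pcomp]
  | succ k ih =>
      have hc : ((k+1 : ℕ) : Fin m) = (k : Fin m) + 1 := by push_cast; ring
      have hstep := cycle_step J hz (i + (k:Fin m) + 1)
      have h1 : i + (k:Fin m) + 1 - 1 = i + (k:Fin m) := by ring
      have h2 : i + (k:Fin m) + 1 = i + 1 + (k:Fin m) := by ring
      rw [hc, ← add_assoc, hstep, h1, ih, h2]
      exact (pcomp_succ J i k (z i)).symm

private lemma neg_one_cast (hm : 0 < m) : ((m-1:ℕ) : Fin m) = -1 := by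
  have h : ((m-1:ℕ):Fin m) + 1 = 0 := by
    rw [show ((1:Fin m)) = ((1:ℕ):Fin m) by simp, ← Nat.cast_add,
      Nat.sub_add_cancel hm, Fin.natCast_self]
  exact eq_neg_of_add_eq_zero_left h

/-- The `i`-th coordinate projection restricted to the set of cycles is a bijection
from `Z` onto `F_i`; in particular `Q_i (Z) = F_i`. -/
theorem coordinate_projection_bijOn_cycleSet
    (A : Fin m → X → Set X) (J : Fin m → X → X)
    (hA : ∀ i, SVMaxMonotone (A i)) (hJ : ∀ i, IsResolventOf (J i) (A i))
    (i : Fin m) :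
    Set.BijOn (fun z : Fin m → X => z i) (cycleSet J) (cycFix J i) ∧
    (fun z : Fin m → X => z i) '' cycleSet J = cycFix J i := by

  have hm : 0 < m := Nat.pos_of_ne_zero (NeZero.ne m)
  have hmaps : Set.MapsTo (fun z : Fin m → X => z i) (cycleSet J) (cycFix J i) := by
    intro z hz
    show cyclicComp J i (z i) = z i
    rw [cyclicComp_eq_pcomp, ← cycle_coord J hz i m, Fin.natCast_self, add_zero]
  have hinj : Set.InjOn (fun z : Fin m → X => z i) (cycleSet J) := by
    intro z hz w hw h
    funext j
    have hj : i + (((j - i).val : ℕ) : Fin m) = j := by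
      rw [Fin.cast_val_eq_self]; ring
    have h1 := cycle_coord J hz i (j - i).val
    have h2 := cycle_coord J hw i (j - i).val
    rw [hj] at h1 h2
    rw [h1, h2]
    exact congrArg _ h
  have hsurj : Set.SurjOn (fun z : Fin m → X => z i) (cycleSet J) (cycFix J i) := by
    intro x hx
    have hfix : pcomp J i m x = x := by
      have := hx; rw [cycFix, Set.mem_setOf_eq, cyclicComp_eq_pcomp] at this; exact this
    set z : Fin m → X := fun j => pcomp J i (j - i).val x with hzdef
    have hzi : z i = x := by simp [hzdef, pcomp]
    have hzc : z ∈ cycleSet J := by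
      funext j
      show J j (z (j - 1)) = z j
      rcases Nat.eq_zero_or_eq_succ_pred (j - i).val with h0 | hk
      · -- j = i
        have hji : j = i := by
          have : j - i = 0 := Fin.ext (by simpa using h0)
          linear_combination this
        have hval : (i - 1 - i).val = m - 1 := by
          have hh : i - 1 - i = ((m-1:ℕ) : Fin m) := by
            rw [neg_one_cast hm]; ring
          rw [hh, Fin.val_cast_of_lt (Nat.sub_lt hm one_pos)]
        have hstep : pcomp J i ((m-1)+1) x = J (i + 1 + ((m-1:ℕ) : Fin m)) (pcomp J i (m-1) x) :=
          pcomp_succ J i (m-1) x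
        rw [Nat.sub_add_cancel hm] at hstep
        have hidx : i + 1 + ((m-1:ℕ) : Fin m) = i := by
          rw [neg_one_cast hm]; ring
        rw [hji, hzi, hzdef]
        simp only
        rw [hval]
        conv_rhs => rw [← hfix, hstep, hidx]
      · set k := (j - i).val - 1 with hkdef
        have hjk : (j - i).val = k + 1 := hk
        have hklt : k + 1 < m := hjk ▸ (j - i).isLt
        have hj1 : (j - 1 - i).val = k := by
          have ha : j - i = ((k+1:ℕ) : Fin m) := by
            conv_lhs => rw [← Fin.cast_val_eq_self (j - i), hjk]
          have : j - 1 - i = ((k:ℕ) : Fin m) := by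
            have hcast : ((k+1:ℕ) : Fin m) = ((k:ℕ) : Fin m) + 1 := by push_cast; ring
            have := ha
            rw [hcast] at this
            linear_combination this
          rw [this, Fin.val_cast_of_lt (lt_trans (Nat.lt_succ_self k) hklt)]
        have hidx : i + 1 + ((k:ℕ) : Fin m) = j := by
          have ha : j - i = ((k+1:ℕ) : Fin m) := by
            conv_lhs => rw [← Fin.cast_val_eq_self (j - i), hjk]
          have hcast : ((k+1:ℕ) : Fin m) = ((k:ℕ) : Fin m) + 1 := by push_cast; ring
          rw [hcast] at ha
          linear_combination -ha
        show J j (z (j - 1)) = z j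
        rw [hzdef]
        simp only
        rw [hj1, hjk, pcomp_succ, hidx]
    exact ⟨z, hzc, hzi⟩
  have hbij : Set.BijOn (fun z : Fin m → X => z i) (cycleSet J) (cycFix J i) :=
    ⟨hmaps, hinj, hsurj⟩
  exact ⟨hbij, hbij.image_eq⟩
end

section
/- Fix(J_A R) = Fix(J_{(1/2)A} ∘ ((Id + R)/2)); that is, a point x ∈ X^m satisfies x = J_A(Rx) if and only if x = J_{(1/2)A}((x + Rx)/2). -/
open Pointwise InnerProductSpace

variable {X : Type*} [NormedAddCommGroup X] [InnerProductSpace ℝ X]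
variable {m : ℕ} [NeZero m]

/-- `Fix (J_A R) = Fix (J_{(1/2)A} ∘ (Id + R)/2)`: `x = J_A (R x)` iff
`x = J_{(1/2)A} ((x + R x)/2)`, where `J_{(1/2)A}` is the resolvent of `(1/2) A`. -/
theorem fix_resolvent_shift_eq_fix_half
    (A : Fin m → X → Set X) (J : Fin m → X → X) (Jhalf : (Fin m → X) → (Fin m → X))
    (hA : ∀ i, SVMaxMonotone (A i)) (hJ : ∀ i, IsResolventOf (J i) (A i))
    (hJhalf : ∀ x y : Fin m → X,
      Jhalf y = x ↔ y - x ∈ (2 : ℝ)⁻¹ • prodOp A x) :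
    {x : Fin m → X | resProd J (shiftR x) = x} =
      {x : Fin m → X | Jhalf ((2 : ℝ)⁻¹ • (x + shiftR x)) = x} := by
  ext x
  simp only [Set.mem_setOf_eq, hJhalf]
  have key : (2⁻¹:ℝ) • (x + shiftR x) - x = (2⁻¹:ℝ) • (shiftR x - x) := by module
  rw [key, Set.smul_mem_smul_set_iff₀ (by norm_num : (2⁻¹:ℝ) ≠ 0)]
  constructor
  · intro h i
    show (shiftR x - x) i ∈ A i (x i)
    simpa [shiftR] using (hJ i (x i) (x (i-1))).mp (congrFun h i)
  · intro h
    funext i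
    exact (hJ i (x i) (x (i-1))).mpr (by simpa [shiftR] using h i)
end
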